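/- arXiv:1005.0498 — 4 statements merged into one kernel-verified Lean document; each statement's English description precedes it below -/
import Mathlib

section
/- For an infinite countable family of nonnegative real numbers (aₙ)_{n∈ℤ} with ∑_{n∈ℤ} aₙ < ∞, the following holds: inf_{k∈ℤ} ∑_{n≠k} aₙ ≥ ∑_{n∈ℤ} min(aₙ, a_{n+1}). -/
theorem stmt_1 (a : ℤ → ℝ) (hnn : ∀ n, 0 ≤ a n) (hsum : Summable a) :
    (⨅ k : ℤ, ∑' n : {n : ℤ // n ≠ k}, a n) ≥ ∑' n : ℤ, min (a n) (a (n + 1)) := by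
  have hmin : Summable fun n : ℤ => min (a n) (a (n + 1)) := by
    apply Summable.of_nonneg_of_le (fun n => le_min (hnn n) (hnn (n+1)))
      (fun n => min_le_left _ _) hsum
  apply le_ciInf
  intro k
  have hj : StrictMono (fun n : ℤ => if n < k then n else n + 1) := by
    intro n m h
    simp only
    split_ifs <;> omega
  have hne : ∀ n : ℤ, (if n < k then n else n + 1) ≠ k := by
    intro n; split_ifs <;> omega
  refine Summable.tsum_le_tsum_of_inj (fun n : ℤ => (⟨if n < k then n else n + 1, hne n⟩ : {n : ℤ // n ≠ k}))
    (fun n m h => hj.injective (congrArg Subtype.val h))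
    (fun c _ => hnn c.1) (fun n => ?_) hmin (hsum.subtype _)
  simp only
  split_ifs
  · exact min_le_left _ _
  · exact min_le_right _ _
end

section
/- For M nonnegative real numbers a₀,…,a_{M−1}, min over k of the sum ∑_{n≠k} aₙ is at least ∑_{n=0}^{M−2} min(aₙ, a_{n+1}). -/
theorem stmt_2 (M : ℕ) (hM : 1 ≤ M) (a : ℕ → ℝ) (hnn : ∀ n, 0 ≤ a n) :
    (⨅ k : Fin M, ∑ n ∈ (Finset.range M).erase (k : ℕ), a n) ≥
      ∑ n ∈ Finset.range (M - 1), min (a n) (a (n + 1)) := by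
  have : Nonempty (Fin M) := ⟨⟨0, hM⟩⟩
  apply le_ciInf
  intro k
  set g : ℕ → ℕ := fun n => if n < (k : ℕ) then n else n + 1 with hg
  have hginj : Function.Injective g := by
    intro x y hxy
    simp only [hg] at hxy
    split_ifs at hxy <;> omega
  calc ∑ n ∈ Finset.range (M - 1), min (a n) (a (n + 1))
      ≤ ∑ n ∈ Finset.range (M - 1), a (g n) := by
        apply Finset.sum_le_sum
        intro n _
        simp only [hg]
        split_ifs
        · exact min_le_left _ _
        · exact min_le_right _ _
    _ = ∑ m ∈ (Finset.range (M - 1)).image g, a m := by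
        rw [Finset.sum_image (fun x _ y _ h => hginj h)]
    _ ≤ ∑ n ∈ (Finset.range M).erase (k : ℕ), a n := by
        apply Finset.sum_le_sum_of_subset_of_nonneg
        · intro m hm
          simp only [Finset.mem_image, Finset.mem_range] at hm
          obtain ⟨n, hn, rfl⟩ := hm
          have hk := k.isLt
          simp only [Finset.mem_erase, Finset.mem_range, hg]
          split_ifs <;> omega
        · intro n _ _; exact hnn n
end

section
/- Let f : ℝ → ℝ be a unimodal probability density with mode θ₀, and h > 0. Then ∫_0^h sup_{l∈ℤ} f(φ + lh) dφ = sup_{c∈ℝ} ∫_{c−h/2}^{c+h/2} f(φ) dφ. Consequently the proposed lower bound 1 − ∫_0^h sup_{l∈ℤ} f(φ+lh) dφ equals the minimum h-outage error probability 1 − sup_c ∫_{c−h/2}^{c+h/2} f. -/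
open MeasureTheory Filter

theorem stmt_12 (f : ℝ → ℝ) (hfc : Continuous f) (hfnn : ∀ φ, 0 ≤ f φ)
    (hfint : Integrable f) (hf1 : ∫ φ, f φ = 1) (θ₀ : ℝ)
    (hmono : MonotoneOn f (Set.Iic θ₀)) (hanti : AntitoneOn f (Set.Ici θ₀))
    (htop : Tendsto f atTop (nhds 0)) (hbot : Tendsto f atBot (nhds 0))
    (h : ℝ) (hh : 0 < h)
    (hsum : ∀ᵐ φ : ℝ, Summable (fun l : ℤ => f (φ + l * h))) :
    (∫ φ in (0:ℝ)..h, ⨆ l : ℤ, f (φ + l * h)) =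
      ⨆ c : ℝ, ∫ φ in (c - h / 2)..(c + h / 2), f φ := by
  -- f is maximized at θ₀
  have hfθ : ∀ x, f x ≤ f θ₀ := by
    intro x
    rcases le_total x θ₀ with hx | hx
    · exact hmono (Set.mem_Iic.mpr hx) (Set.mem_Iic.mpr le_rfl) hx
    · exact hanti (Set.mem_Ici.mpr le_rfl) (Set.mem_Ici.mpr hx) hx
  set L : ℝ → ℤ := fun φ => ⌊(θ₀ - φ) / h⌋ with hLdef
  set G : ℝ → ℝ := fun φ => max (f (φ + (L φ : ℝ) * h)) (f (φ + ((L φ : ℝ) + 1) * h))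
    with hGdef
  have hLle : ∀ φ, φ + (L φ : ℝ) * h ≤ θ₀ := by
    intro φ
    have := Int.floor_le ((θ₀ - φ) / h)
    have := (le_div_iff₀ hh).mp this
    linarith
  have hLge : ∀ φ, θ₀ ≤ φ + ((L φ : ℝ) + 1) * h := by
    intro φ
    have := Int.lt_floor_add_one ((θ₀ - φ) / h)
    have := (div_lt_iff₀ hh).mp this
    push_cast at this ⊢
    linarith
  -- every translate is below G
  have hbound : ∀ φ (l : ℤ), f (φ + (l : ℝ) * h) ≤ G φ := by
    intro φ l
    rcases le_or_gt l (L φ) with hl | hl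
    · refine le_trans ?_ (le_max_left _ _)
      have h1 : (l : ℝ) * h ≤ (L φ : ℝ) * h :=
        mul_le_mul_of_nonneg_right (by exact_mod_cast hl) hh.le
      exact hmono (by simpa using le_trans (by linarith) (hLle φ))
        (Set.mem_Iic.mpr (hLle φ)) (by linarith)
    · refine le_trans ?_ (le_max_right _ _)
      have hl' : (L φ : ℝ) + 1 ≤ (l : ℝ) := by exact_mod_cast hl
      have h1 : ((L φ : ℝ) + 1) * h ≤ (l : ℝ) * h :=
        mul_le_mul_of_nonneg_right hl' hh.le
      exact hanti (Set.mem_Ici.mpr (hLge φ))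
        (Set.mem_Ici.mpr (le_trans (hLge φ) (by linarith))) (by linarith)
  have hGnn : ∀ φ, 0 ≤ G φ := fun φ => le_trans (hfnn _) (le_max_left _ _)
  -- the sup equals G
  have hG : ∀ φ, (⨆ l : ℤ, f (φ + (l : ℝ) * h)) = G φ := by
    intro φ
    have hbdd : BddAbove (Set.range fun l : ℤ => f (φ + (l : ℝ) * h)) := by
      refine ⟨G φ, ?_⟩
      rintro x ⟨l, rfl⟩
      exact hbound φ l
    refine le_antisymm (ciSup_le (hbound φ)) ?_
    rcases max_cases (f (φ + (L φ : ℝ) * h)) (f (φ + ((L φ : ℝ) + 1) * h)) with hm | hm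
    · rw [hGdef]
      simp only
      rw [hm.1]
      exact le_ciSup hbdd (L φ)
    · rw [hGdef]
      simp only
      rw [hm.1]
      have : f (φ + ((L φ : ℝ) + 1) * h) = f (φ + ((L φ + 1 : ℤ) : ℝ) * h) := by push_cast; ring_nf
      rw [this]
      exact le_ciSup hbdd (L φ + 1)
  -- G is h-periodic
  have hGper : Function.Periodic G h := by
    intro φ
    have hL : L (φ + h) = L φ - 1 := by
      rw [hLdef]
      simp only
      rw [show (θ₀ - (φ + h)) / h = (θ₀ - φ) / h - 1 by field_simp; ring]
      exact Int.floor_sub_one _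
    rw [hGdef]
    simp only [hL]
    push_cast
    rw [show φ + h + ((L φ : ℝ) - 1) * h = φ + (L φ : ℝ) * h by ring,
        show φ + h + ((L φ : ℝ) - 1 + 1) * h = φ + ((L φ : ℝ) + 1) * h by ring]
  -- G is measurable
  have hGmeas : Measurable G := by
    have hLm : Measurable L :=
      Int.measurable_floor.comp ((measurable_const.sub measurable_id).div_const h)
    have hcast : Measurable fun n : ℤ => (n : ℝ) := measurable_from_top
    have m1 : Measurable fun φ => φ + (L φ : ℝ) * h := by
      apply measurable_id.add
      exact (hcast.comp hLm).mul measurable_const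
    have m2 : Measurable fun φ => φ + ((L φ : ℝ) + 1) * h := by
      apply measurable_id.add
      exact ((hcast.comp hLm).add measurable_const).mul measurable_const
    exact (hfc.measurable.comp m1).max (hfc.measurable.comp m2)
  -- G is interval integrable everywhere
  have hGint : ∀ a b : ℝ, IntervalIntegrable G volume a b := by
    intro a b
    refine (intervalIntegrable_const (c := f θ₀)).mono_fun
      hGmeas.aestronglyMeasurable.restrict (ae_of_all _ fun x => ?_)
    simp only [Real.norm_eq_abs]
    rw [abs_of_nonneg (hGnn x), abs_of_nonneg (hfnn θ₀)]
    exact max_le (hfθ _) (hfθ _)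
  have hrw : (∫ φ in (0:ℝ)..h, ⨆ l : ℤ, f (φ + (l : ℝ) * h)) = ∫ φ in (0:ℝ)..h, G φ :=
    intervalIntegral.integral_congr fun x _ => hG x
  -- on [θ₀ - h, θ₀], G is the max of the two nearest translates
  have hGmax : ∀ u ∈ Set.Icc (θ₀ - h) θ₀, G u = max (f u) (f (u + h)) := by
    intro u hu
    rcases eq_or_lt_of_le hu.1 with he | hlt
    · subst he
      have hL1 : L (θ₀ - h) = 1 := by
        rw [hLdef]
        simp only
        rw [show (θ₀ - (θ₀ - h)) / h = 1 by field_simp; ring]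
        exact Int.floor_one
      rw [hGdef]
      simp only [hL1]
      push_cast
      rw [show θ₀ - h + 1 * h = θ₀ by ring, show θ₀ - h + (1 + 1) * h = θ₀ + h by ring,
          show θ₀ - h + h = θ₀ by ring]
      rw [max_eq_left (hanti (Set.mem_Ici.mpr le_rfl) (Set.mem_Ici.mpr (by linarith)) (by linarith)),
          max_eq_right (hmono (Set.mem_Iic.mpr (by linarith)) (Set.mem_Iic.mpr le_rfl) (by linarith))]
    · have hL0 : L u = 0 := by
        rw [hLdef]
        simp only
        rw [Int.floor_eq_zero_iff]
        exact ⟨div_nonneg (by linarith [hu.2]) hh.le, (div_lt_one hh).mpr (by linarith)⟩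
      rw [hGdef]
      simp only [hL0]
      push_cast
      rw [show u + 0 * h = u by ring, show u + (0 + 1) * h = u + h by ring]
  -- crossing point
  set A : Set ℝ := {u | u ∈ Set.Icc (θ₀ - h) θ₀ ∧ f u ≤ f (u + h)} with hAdef
  have hAne : (θ₀ - h) ∈ A := by
    refine ⟨⟨le_rfl, by linarith⟩, ?_⟩
    rw [show θ₀ - h + h = θ₀ by ring]
    exact hmono (Set.mem_Iic.mpr (by linarith)) (Set.mem_Iic.mpr le_rfl) (by linarith)
  have hAbdd : BddAbove A := ⟨θ₀, fun u hu => hu.1.2⟩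
  have hAclosed : IsClosed A := by
    have : A = Set.Icc (θ₀ - h) θ₀ ∩ {u | f u ≤ f (u + h)} := by
      ext u; simp [hAdef, Set.mem_inter_iff]
    rw [this]
    exact isClosed_Icc.inter (isClosed_le hfc (hfc.comp (continuous_id.add continuous_const)))
  set t : ℝ := sSup A with htdef
  have htA : t ∈ A := hAclosed.csSup_mem ⟨_, hAne⟩ hAbdd
  have ht1 : θ₀ - h ≤ t := le_csSup hAbdd hAne
  have ht2 : t ≤ θ₀ := htA.1.2
  have hfii : ∀ a b : ℝ, IntervalIntegrable f volume a b := fun a b =>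
    hfint.intervalIntegrable
  -- compute ∫₀^h G
  have hshift : (∫ φ in (0:ℝ)..h, G φ) = ∫ u in (θ₀ - h)..θ₀, G u := by
    have := hGper.intervalIntegral_add_eq (θ₀ - h) 0
    rw [show θ₀ - h + h = θ₀ by ring, zero_add] at this
    exact this.symm
  have hsplit : (∫ u in (θ₀ - h)..θ₀, G u) =
      (∫ u in (θ₀ - h)..t, G u) + ∫ u in t..θ₀, G u :=
    (intervalIntegral.integral_add_adjacent_intervals (hGint _ _) (hGint _ _)).symm
  have hI1 : (∫ u in (θ₀ - h)..t, G u) = ∫ u in (θ₀ - h)..t, f (u + h) := by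
    refine intervalIntegral.integral_congr fun u hu => ?_
    rw [Set.uIcc_of_le ht1] at hu
    have hu1 : θ₀ - h ≤ u := hu.1
    have hu2 : u ≤ t := hu.2
    rw [hGmax u ⟨hu1, le_trans hu2 ht2⟩]
    refine max_eq_right ?_
    calc f u ≤ f t := hmono (Set.mem_Iic.mpr (le_trans hu2 ht2)) (Set.mem_Iic.mpr ht2) hu2
      _ ≤ f (t + h) := htA.2
      _ ≤ f (u + h) := hanti (Set.mem_Ici.mpr (by linarith)) (Set.mem_Ici.mpr (by linarith))
          (by linarith)
  have hI2 : (∫ u in t..θ₀, G u) = ∫ u in t..θ₀, f u := by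
    refine intervalIntegral.integral_congr_ae (ae_of_all _ fun u hu => ?_)
    rw [Set.uIoc_of_le ht2] at hu
    have hu1 : t < u := hu.1
    have hu2 : u ≤ θ₀ := hu.2
    rw [hGmax u ⟨by linarith, hu2⟩]
    refine max_eq_left ?_
    have hnotA : u ∉ A := fun huA => absurd (le_csSup hAbdd huA) (not_le.mpr hu1)
    have : ¬ f u ≤ f (u + h) := fun hle => hnotA ⟨⟨by linarith, hu2⟩, hle⟩
    linarith
  have hI1' : (∫ u in (θ₀ - h)..t, f (u + h)) = ∫ u in θ₀..(t + h), f u := by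
    rw [intervalIntegral.integral_comp_add_right f h, show θ₀ - h + h = θ₀ by ring]
  have hGval : (∫ φ in (0:ℝ)..h, G φ) = ∫ u in t..(t + h), f u := by
    rw [hshift, hsplit, hI1, hI1', hI2, add_comm,
      intervalIntegral.integral_add_adjacent_intervals (hfii t θ₀) (hfii θ₀ (t + h))]
  -- every centered integral is at most ∫₀^h G
  have key : ∀ c : ℝ, (∫ φ in (c - h / 2)..(c + h / 2), f φ) ≤ ∫ φ in (0:ℝ)..h, G φ := by
    intro c
    have step1 : (∫ φ in (c - h / 2)..(c + h / 2), f φ) ≤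
        ∫ φ in (c - h / 2)..(c + h / 2), G φ := by
      refine intervalIntegral.integral_mono_on (by linarith) (hfii _ _) (hGint _ _)
        fun x _ => ?_
      have := hbound x 0
      simpa using this
    have step2 : (∫ φ in (c - h / 2)..(c + h / 2), G φ) = ∫ φ in (0:ℝ)..h, G φ := by
      have := hGper.intervalIntegral_add_eq (c - h / 2) 0
      rw [show c - h / 2 + h = c + h / 2 by ring, zero_add] at this
      exact this
    linarith
  -- the family of centered integrals is bounded above
  have hbddV : BddAbove (Set.range fun c : ℝ => ∫ φ in (c - h / 2)..(c + h / 2), f φ) := by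
    refine ⟨1, ?_⟩
    rintro x ⟨c, rfl⟩
    simp only
    rw [intervalIntegral.integral_of_le (by linarith)]
    calc (∫ φ in Set.Ioc (c - h / 2) (c + h / 2), f φ) ≤ ∫ φ, f φ :=
        setIntegral_le_integral hfint (ae_of_all _ hfnn)
      _ = 1 := hf1
  refine le_antisymm ?_ (ciSup_le fun c => (key c).trans_eq hrw.symm)
  rw [hrw, hGval]
  have : (∫ u in t..(t + h), f u) =
      ∫ φ in ((t + h / 2) - h / 2)..((t + h / 2) + h / 2), f φ := by
    rw [show (t + h / 2) - h / 2 = t by ring, show (t + h / 2) + h / 2 = t + h by ring]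
  rw [this]
  exact le_ciSup hbddV (t + h / 2)
end

section
/- Let g : ℝ → ℝ be measurable, locally integrable, and suppose ∫_{α−h/2}^{α+h/2} g(φ) dφ = ∫_{−h/2}^{h/2} g(φ) dφ for every α ∈ ℝ, where h > 0. Then g is h-periodic almost everywhere: g(φ + h) = g(φ) for a.e. φ ∈ ℝ. -/
open MeasureTheory Metric Filter

theorem stmt_17 (g : ℝ → ℝ) (hgm : Measurable g) (hgl : LocallyIntegrable g)
    (h : ℝ) (hh : 0 < h)
    (hconst : ∀ α : ℝ,
      (∫ φ in (α - h / 2)..(α + h / 2), g φ) = ∫ φ in (-(h / 2))..(h / 2), g φ) :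
    ∀ᵐ φ : ℝ, g (φ + h) = g φ := by
  -- interval integrability everywhere
  have hii : ∀ a b : ℝ, IntervalIntegrable g volume a b := fun a b => by
    rw [intervalIntegrable_iff]
    exact (hgl.integrableOn_isCompact isCompact_uIcc).mono_set Set.uIoc_subset_uIcc
  -- ∫ over any interval of length h is constant
  have hc : ∀ x : ℝ, (∫ φ in x..(x + h), g φ) = ∫ φ in (-(h / 2))..(h / 2), g φ := by
    intro x
    have := hconst (x + h / 2)
    have e1 : x + h / 2 - h / 2 = x := by ring
    have e2 : x + h / 2 + h / 2 = x + h := by ring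
    rwa [e1, e2] at this
  -- key translation invariance of interval integrals
  have key : ∀ a b : ℝ, (∫ φ in (a + h)..(b + h), g φ) = ∫ φ in a..b, g φ := by
    intro a b
    have h1 : (∫ φ in a..b, g φ) + ∫ φ in b..(b + h), g φ
        = (∫ φ in a..(a + h), g φ) + ∫ φ in (a + h)..(b + h), g φ := by
      rw [intervalIntegral.integral_add_adjacent_intervals (hii a b) (hii b (b + h)),
        intervalIntegral.integral_add_adjacent_intervals (hii a (a + h)) (hii (a + h) (b + h))]
    rw [hc a, hc b] at h1
    linarith
  -- set integral over closed balls is translation invariant (by h)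
  have keyBall : ∀ (x δ : ℝ), (∫ y in closedBall (x + h) δ, g y) = ∫ y in closedBall x δ, g y := by
    intro x δ
    rcases le_or_gt δ 0 with hδ | hδ
    · rcases lt_or_eq_of_le hδ with hδ | hδ
      · simp [Metric.closedBall_eq_empty.2 hδ]
      · subst hδ; simp [Metric.closedBall_zero]
    · have e : ∀ z : ℝ, closedBall z δ = Set.Icc (z - δ) (z + δ) := fun z =>
        Real.closedBall_eq_Icc
      rw [e, e, MeasureTheory.integral_Icc_eq_integral_Ioc,
        MeasureTheory.integral_Icc_eq_integral_Ioc,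
        ← intervalIntegral.integral_of_le (by linarith),
        ← intervalIntegral.integral_of_le (by linarith)]
      have e1 : x + h - δ = (x - δ) + h := by ring
      have e2 : x + h + δ = (x + δ) + h := by ring
      rw [e1, e2, key]
  -- Lebesgue differentiation theorem: a.e. point is a Lebesgue point
  have hLeb := IsUnifLocDoublingMeasure.ae_tendsto_average (μ := (volume : Measure ℝ)) hgl 1
  -- set of Lebesgue points translated by h also has full measure
  have hLeb' : ∀ᵐ x : ℝ, ∀ {ι : Type} {l : Filter ι} (w : ι → ℝ) (δ : ι → ℝ),
      Tendsto δ l (nhdsWithin 0 (Set.Ioi 0)) →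
      (∀ᶠ j in l, (x + h) ∈ closedBall (w j) (1 * δ j)) →
      Tendsto (fun j => ⨍ y in closedBall (w j) (δ j), g y) l (nhds (g (x + h))) := by
    rw [ae_iff] at hLeb ⊢
    have : {x : ℝ | ¬ ∀ {ι : Type} {l : Filter ι} (w : ι → ℝ) (δ : ι → ℝ),
        Tendsto δ l (nhdsWithin 0 (Set.Ioi 0)) →
        (∀ᶠ j in l, (x + h) ∈ closedBall (w j) (1 * δ j)) →
        Tendsto (fun j => ⨍ y in closedBall (w j) (δ j), g y) l (nhds (g (x + h)))}
        = (fun x : ℝ => x + h) ⁻¹' {x : ℝ | ¬ ∀ {ι : Type} {l : Filter ι} (w : ι → ℝ) (δ : ι → ℝ),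
        Tendsto δ l (nhdsWithin 0 (Set.Ioi 0)) →
        (∀ᶠ j in l, x ∈ closedBall (w j) (1 * δ j)) →
        Tendsto (fun j => ⨍ y in closedBall (w j) (δ j), g y) l (nhds (g x))} := rfl
    rw [this, MeasureTheory.measure_preimage_add_right]
    exact hLeb
  filter_upwards [hLeb, hLeb'] with x hx hx'
  -- use the sequence δ j = 1/(j+1), balls centered at x and x+h respectively
  set δ : ℕ → ℝ := fun j => 1 / (j + 1) with hδdef
  have hδpos : ∀ j : ℕ, (0:ℝ) < δ j := fun j => by positivity
  have hδ : Tendsto δ atTop (nhdsWithin 0 (Set.Ioi 0)) := by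
    apply tendsto_nhdsWithin_of_tendsto_nhds_of_eventually_within
    · exact tendsto_one_div_add_atTop_nhds_zero_nat
    · exact Eventually.of_forall fun j => hδpos j
  have h1 : Tendsto (fun j => ⨍ y in closedBall x (δ j), g y) atTop (nhds (g x)) :=
    hx (fun _ => x) δ hδ (Eventually.of_forall fun j => by
      simp [mem_closedBall, (hδpos j).le])
  have h2 : Tendsto (fun j => ⨍ y in closedBall (x + h) (δ j), g y) atTop (nhds (g (x + h))) :=
    hx' (fun _ => x + h) δ hδ (Eventually.of_forall fun j => by
      simp [mem_closedBall, (hδpos j).le])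
  -- the two averages are equal
  have heq : ∀ j : ℕ, (⨍ y in closedBall (x + h) (δ j), g y) = ⨍ y in closedBall x (δ j), g y := by
    intro j
    rw [setAverage_eq, setAverage_eq, keyBall]
    congr 2
    rw [Real.closedBall_eq_Icc, Real.closedBall_eq_Icc, Real.volume_real_Icc, Real.volume_real_Icc]
    congr 1
    ring
  rw [show (fun j => ⨍ y in closedBall (x + h) (δ j), g y)
      = fun j => ⨍ y in closedBall x (δ j), g y from funext heq] at h2
  exact tendsto_nhds_unique h2 h1
end
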